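/- Let f₁, ..., f_m: ℝⁿ → ℝ be L-smooth (each gradient L_i-Lipschitz, L = max L_i). Suppose at iteration k of direct multisearch all poll points fail sufficient decrease, i.e., for every d ∈ D_k with ‖d‖ = 1 there exists an index i (depending on d) with f_i(x_k + α_k d) ≥ f_i(x_k) - ρ(α_k). Then the approximate Pareto stationarity measure μ_{D_k}(x_k) = -min_{d ∈ D_k} max_i ⟨∇f_i(x_k), d⟩ satisfies μ_{D_k}(x_k) ≤ α_k·L/2 + ρ(α_k)/α_k. -/

import Mathlib

local notation "⟪" x ", " y "⟫" => @inner ℝ _ _ x y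

lemma descent_aux {n : ℕ} (f : EuclideanSpace ℝ (Fin n) → ℝ)
    (g : EuclideanSpace ℝ (Fin n) → EuclideanSpace ℝ (Fin n))
    (L : ℝ) (hgrad : ∀ y, HasGradientAt f (g y) y)
    (hlip : ∀ y z, ‖g y - g z‖ ≤ L * ‖y - z‖)
    (x v : EuclideanSpace ℝ (Fin n)) :
    f (x + v) ≤ f x + ⟪g x, v⟫ + L / 2 * ‖v‖ ^ 2 := by
  set φ : ℝ → ℝ := fun t => f (x + t • v) - t * ⟪g x, v⟫ - L * t ^ 2 * ‖v‖ ^ 2 / 2 with hφ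
  have hline : ∀ t : ℝ, HasDerivAt (fun s : ℝ => x + s • v) v t := by
    intro t
    simpa using ((hasDerivAt_id t).smul_const v).const_add x
  have hder : ∀ t : ℝ, HasDerivAt φ
      (⟪g (x + t • v), v⟫ - ⟪g x, v⟫ - L * t * ‖v‖ ^ 2) t := by
    intro t
    have h1 : HasDerivAt (fun s : ℝ => f (x + s • v)) ⟪g (x + t • v), v⟫ t := by
      have := ((hgrad (x + t • v)).hasFDerivAt.comp t (hline t)).hasDerivAt
      exact this.congr_deriv (by simp)
    have h2 : HasDerivAt (fun s : ℝ => s * ⟪g x, v⟫) ⟪g x, v⟫ t := by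
      simpa using (hasDerivAt_id t).mul_const (⟪g x, v⟫ : ℝ)
    have h3 : HasDerivAt (fun s : ℝ => L * s ^ 2 * ‖v‖ ^ 2 / 2) (L * t * ‖v‖ ^ 2) t := by
      have : HasDerivAt (fun s : ℝ => s ^ 2) (2 * t) t := by
        simpa using hasDerivAt_pow 2 t
      have := (((this.const_mul L).mul_const (‖v‖ ^ 2)).div_const 2)
      exact this.congr_deriv (by ring)
    exact (h1.sub h2).sub h3
  have hnonpos : ∀ t ∈ Set.Icc (0:ℝ) 1,
      ⟪g (x + t • v), v⟫ - ⟪g x, v⟫ - L * t * ‖v‖ ^ 2 ≤ 0 := by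
    intro t ht
    have h1 : ⟪g (x + t • v) - g x, v⟫ ≤ ‖g (x + t • v) - g x‖ * ‖v‖ :=
      real_inner_le_norm _ _
    have h2 : ‖g (x + t • v) - g x‖ ≤ L * (t * ‖v‖) := by
      have := hlip (x + t • v) x
      simpa [norm_smul, abs_of_nonneg ht.1, mul_assoc] using this
    have h3 : ⟪g (x + t • v), v⟫ - ⟪g x, v⟫ = ⟪g (x + t • v) - g x, v⟫ := by
      rw [inner_sub_left]
    nlinarith [norm_nonneg v, norm_nonneg (g (x + t • v) - g x)]
  have hanti : AntitoneOn φ (Set.Icc 0 1) := by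
    apply antitoneOn_of_deriv_nonpos (convex_Icc 0 1)
    · exact (fun t _ => ((hder t).differentiableAt).continuousAt.continuousWithinAt)
    · intro t _
      exact (hder t).differentiableAt.differentiableWithinAt
    · intro t ht
      rw [(hder t).deriv]
      exact hnonpos t (Set.mem_Icc_of_Ioo (by simpa using ht))
  have := hanti (Set.left_mem_Icc.2 zero_le_one) (Set.right_mem_Icc.2 zero_le_one) zero_le_one
  simp only [hφ, one_smul, zero_smul, add_zero, one_pow, zero_pow, one_mul, mul_zero, zero_mul,
    sub_zero, mul_one, zero_div] at this
  linarith

theorem stmt16 {n m : ℕ} (hm : 0 < m)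
    (f : Fin m → EuclideanSpace ℝ (Fin n) → ℝ)
    (g : Fin m → EuclideanSpace ℝ (Fin n) → EuclideanSpace ℝ (Fin n))
    (L : ℝ) (hL : 0 ≤ L)
    (hgrad : ∀ i y, HasGradientAt (f i) (g i y) y)
    (hlip : ∀ i y z, ‖g i y - g i z‖ ≤ L * ‖y - z‖)
    (x : EuclideanSpace ℝ (Fin n)) (α : ℝ) (hα : 0 < α)
    (D : Finset (EuclideanSpace ℝ (Fin n))) (hD : D.Nonempty)
    (hunit : ∀ d ∈ D, ‖d‖ = 1)
    (ρ : ℝ → ℝ) (hρ : ∀ a, 0 ≤ ρ a)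
    (hfail : ∀ d ∈ D, ∃ i : Fin m, f i x - ρ α ≤ f i (x + α • d)) :
    -(D.inf' hD fun d =>
        (Finset.univ : Finset (Fin m)).sup' ⟨⟨0, hm⟩, Finset.mem_univ _⟩
          fun i => ⟪g i x, d⟫) ≤ α * L / 2 + ρ α / α := by
  rw [neg_le]
  apply Finset.le_inf'
  intro d hd
  obtain ⟨i, hi⟩ := hfail d hd
  have hdesc := descent_aux (f i) (g i) L (hgrad i) (hlip i) x (α • d)
  have hnorm : ‖α • d‖ = α := by
    rw [norm_smul, hunit d hd, Real.norm_eq_abs, abs_of_pos hα, mul_one]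
  have hinner : ⟪g i x, α • d⟫ = α * ⟪g i x, d⟫ := real_inner_smul_right _ _ _
  rw [hnorm, hinner] at hdesc
  have hq : ρ α / α * α = ρ α := div_mul_cancel₀ _ (ne_of_gt hα)
  have key : -(α * L / 2 + ρ α / α) ≤ ⟪g i x, d⟫ := by nlinarith [hdesc, hi, hα, hq]
  exact key.trans (Finset.le_sup' (fun j => ⟪g j x, d⟫) (Finset.mem_univ i))
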